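/- Every Poisson differential operator H over V is integrable: there exists a skew-symmetric bidifferential operator M (namely M_F = (D_H)_F^*) such that X_{H(F)}(H) − (D_H)_F ∘ H = H ∘ (D_H)_F^* for all F ∈ V. -/

import Mathlib

/-- An algebra of differential functions in one variable `u`:
a commutative `ℂ`-algebra with partial derivatives `∂/∂u⁽ⁿ⁾`, a derivation `∂/∂x`,
distinguished elements `u⁽ⁿ⁾`, and the total derivative `∂`. -/
structure DiffAlg (V : Type) [CommRing V] [Algebra ℂ V] where
  pd : ℕ → Derivation ℂ V V
  dx : Derivation ℂ V V
  u : ℕ → V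
  total : Derivation ℂ V V
  pd_comm : ∀ m n f, pd m (pd n f) = pd n (pd m f)
  pd_dx : ∀ n f, pd n (dx f) = dx (pd n f)
  pd_u : ∀ m n, pd m (u n) = if m = n then 1 else 0
  dx_u : ∀ n, dx (u n) = 0
  pdFin : ∀ f, Set.Finite {n | pd n f ≠ 0}
  total_eq : ∀ f, total f = (∑ᶠ n, u (n + 1) * pd n f) + dx f

namespace DiffAlg

variable {V : Type} [CommRing V] [Algebra ℂ V]

/-- The evolutionary vector field `X_F` applied to `f`. -/
noncomputable def evf (A : DiffAlg V) (F f : V) : V :=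
  ∑ᶠ n, (fun x => A.total x)^[n] F * A.pd n f

end DiffAlg

/-- Generalized binomial coefficient `C(k, n)` for `k : ℤ`. -/
def intChoose (k : ℤ) (n : ℕ) : ℤ :=
  (∏ i ∈ Finset.range n, (k - (i : ℤ))) / (n.factorial : ℤ)

namespace DiffAlg

variable {V : Type} [CommRing V] [Algebra ℂ V]

/-- Product of two pseudodifferential operators given by their coefficient functions
(`a m` is the coefficient of `∂^m`), using `∂^k ∘ a = Σ_n C(k,n) a⁽ⁿ⁾ ∂^{k-n}`. -/
noncomputable def mulZ (A : DiffAlg V) (a b : ℤ → V) : ℤ → V := fun m =>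
  ∑ᶠ (k : ℤ), ∑ᶠ (n : ℕ), intChoose k n • (a k * (fun x => A.total x)^[n] (b (m - k + n)))

/-- The Fréchet derivative `D_F` as a pseudodifferential operator. -/
noncomputable def DFz (A : DiffAlg V) (F : V) : ℤ → V := fun m =>
  if 0 ≤ m then A.pd m.toNat F else 0

/-- The Lie derivative `𝓛_F(L) = X_F(L) - [D_F, L]` of a pseudodifferential operator. -/
noncomputable def lieD (A : DiffAlg V) (F : V) (L : ℤ → V) : ℤ → V := fun m =>
  evf A F (L m) - (mulZ A (DFz A F) L m - mulZ A L (DFz A F) m)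

/-- The identity pseudodifferential operator. -/
def onePS : ℤ → V := fun m => if m = 0 then 1 else 0

/-- `L` has degree `N` (as a pseudodifferential operator). -/
def hasDeg (c : ℤ → V) (N : ℤ) : Prop := c N ≠ 0 ∧ ∀ m : ℤ, N < m → c m = 0

/-- Embedding of a differential operator (coefficients indexed by `ℕ`) as a
pseudodifferential operator. -/
def loc (a : ℕ → V) : ℤ → V := fun m => if 0 ≤ m then a m.toNat else 0

end DiffAlg

namespace DiffAlg

variable {V : Type} [CommRing V] [Algebra ℂ V]

/-- Application of the differential operator with coefficients `a` to an element. -/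
noncomputable def opApp (A : DiffAlg V) (a : ℕ → V) (f : V) : V :=
  ∑ᶠ k, a k * (fun x => A.total x)^[k] f

/-- The coefficients of the differential operator `(D_A)_F = Σ_k F⁽ᵏ⁾ D_{a_k}`. -/
noncomputable def dafC (A : DiffAlg V) (a : ℕ → V) (F : V) : ℕ → V := fun j =>
  ∑ᶠ k, (fun x => A.total x)^[k] F * A.pd j (a k)

/-- `A` (with coefficients `a`) is hereditary:
`X_{A(F)}(A) - [(D_A)_F, A] = A ∘ (X_F(A))` for all `F`, as pseudodifferential
operators (coefficientwise). -/
noncomputable def IsHereditary (A : DiffAlg V) (a : ℕ → V) : Prop :=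
  ∀ F : V, ∀ m : ℤ,
    loc (fun j => evf A (opApp A a F) (a j)) m
      - (mulZ A (loc (dafC A a F)) (loc a) m - mulZ A (loc a) (loc (dafC A a F)) m)
    = mulZ A (loc a) (loc (fun j => evf A F (a j))) m

end DiffAlg

namespace DiffAlg

variable {V : Type} [CommRing V] [Algebra ℂ V]

/-- Coefficients of the formal adjoint `A* = Σ_m (-∂)^m ∘ a_m` of a differential
operator with coefficients `c`. -/
noncomputable def adjC (A : DiffAlg V) (c : ℕ → V) : ℕ → V := fun j =>
  ∑ᶠ m, if j ≤ m then
    (((-1 : ℤ) ^ m * (m.choose (m - j)) : ℤ)) • (fun x => A.total x)^[m - j] (c m)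
  else 0

/-- The adjoint of the differential operator with coefficients `c`, applied to `x`:
`A*(x) = Σ_j (-1)^j ∂^j (c_j x)`. -/
noncomputable def adjApp (A : DiffAlg V) (c : ℕ → V) (x : V) : V :=
  ∑ᶠ j, ((-1 : ℤ) ^ j) • (fun x => A.total x)^[j] (c j * x)

end DiffAlg

namespace DiffAlg

/-- The Fréchet derivative `D_F` applied to `G`. -/
noncomputable def frechApp {V : Type} [CommRing V] [Algebra ℂ V]
    (A : DiffAlg V) (F G : V) : V :=
  ∑ᶠ m, A.pd m F * (fun x => A.total x)^[m] G

end DiffAlg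

namespace DiffAlg
open Function Finset

variable {V : Type} [CommRing V] [Algebra ℂ V] (A : DiffAlg V)

/-- Iterated total derivative. -/
noncomputable def Dn (A : DiffAlg V) (n : ℕ) (x : V) : V := (fun x => A.total x)^[n] x

lemma Dn_def (n : ℕ) (x : V) : (fun x => A.total x)^[n] x = A.Dn n x := rfl

@[simp] lemma Dn_zero (x : V) : A.Dn 0 x = x := rfl

lemma Dn_succ (n : ℕ) (x : V) : A.Dn (n + 1) x = A.Dn n (A.total x) :=
  Function.iterate_succ_apply _ _ _

lemma Dn_succ' (n : ℕ) (x : V) : A.Dn (n + 1) x = A.total (A.Dn n x) :=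
  Function.iterate_succ_apply' _ _ _

lemma Dn_Dn (m n : ℕ) (x : V) : A.Dn m (A.Dn n x) = A.Dn (m + n) x :=
  (Function.iterate_add_apply _ m n x).symm

@[simp] lemma Dn_zero_elem (n : ℕ) : A.Dn n (0 : V) = 0 := by
  induction n with
  | zero => rfl
  | succ n ih => rw [Dn_succ', ih, map_zero]

lemma Dn_add (n : ℕ) (x y : V) : A.Dn n (x + y) = A.Dn n x + A.Dn n y := by
  induction n with
  | zero => rfl
  | succ n ih => rw [Dn_succ', Dn_succ', Dn_succ', ih, map_add]

lemma Dn_neg (n : ℕ) (x : V) : A.Dn n (-x) = -A.Dn n x := by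
  induction n with
  | zero => rfl
  | succ n ih => rw [Dn_succ', Dn_succ', ih, map_neg]

lemma Dn_sub (n : ℕ) (x y : V) : A.Dn n (x - y) = A.Dn n x - A.Dn n y := by
  rw [sub_eq_add_neg, Dn_add, Dn_neg, sub_eq_add_neg]

lemma Dn_zsmul (n : ℕ) (c : ℤ) (x : V) : A.Dn n (c • x) = c • A.Dn n x := by
  induction n with
  | zero => rfl
  | succ n ih => rw [Dn_succ', Dn_succ', ih, map_zsmul]

lemma Dn_sum (n : ℕ) {ι : Type*} (s : Finset ι) (f : ι → V) :
    A.Dn n (∑ i ∈ s, f i) = ∑ i ∈ s, A.Dn n (f i) := by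
  classical
  induction s using Finset.induction with
  | empty => simp
  | insert _ _ hx ih => rw [Finset.sum_insert hx, Finset.sum_insert hx, Dn_add, ih]

lemma total_mul (x y : V) : A.total (x * y) = A.total x * y + x * A.total y := by
  rw [Derivation.leibniz]
  simp [smul_eq_mul]
  ring

/-- bounded support -/
def Bnd (f : ℕ → V) (N : ℕ) : Prop := ∀ k, N ≤ k → f k = 0

lemma Bnd.mono {f : ℕ → V} {N M : ℕ} (h : Bnd f N) (hNM : N ≤ M) : Bnd f M :=
  fun k hk => h k (le_trans hNM hk)

lemma finsum_eq_range {f : ℕ → V} {N : ℕ} (h : Bnd f N) :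
    ∑ᶠ k, f k = ∑ k ∈ Finset.range N, f k := by
  apply finsum_eq_sum_of_support_subset
  intro k hk
  simp only [Finset.coe_range, Set.mem_Iio]
  by_contra hc
  exact hk (h k (not_lt.mp hc))

lemma pd_bnd (f : V) : ∃ N, Bnd (fun n => A.pd n f) N := by
  obtain ⟨s, hs⟩ := (A.pdFin f).exists_finset_coe
  refine ⟨s.sup id + 1, fun k hk => ?_⟩
  by_contra hc
  have : k ∈ s := by rw [← Finset.mem_coe, hs]; exact hc
  have h2 : k ≤ s.sup id := Finset.le_sup (f := id) this
  omega

lemma Dn_u (k M : ℕ) : A.Dn k (A.u M) = A.u (M + k) := by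
  induction k with
  | zero => rfl
  | succ k ih =>
    rw [Dn_succ', ih]
    have : A.total (A.u (M + k)) = A.u (M + k + 1) := by
      rw [A.total_eq, A.dx_u, add_zero]
      have h1 : ∀ n, (fun n => A.u (n + 1) * A.pd n (A.u (M + k))) n
          = (fun n => if n = M + k then A.u (M + k + 1) else 0) n := by
        intro n
        simp only [A.pd_u]
        by_cases hn : n = M + k <;> simp [hn]
      rw [finsum_congr h1, finsum_eq_single _ (M + k) (fun x hx => by simp [hx])]
      simp
    rw [this]
    ring_nf

lemma pd_total (n : ℕ) (f : V) :
    A.pd n (A.total f) = A.total (A.pd n f) + (if n = 0 then 0 else A.pd (n - 1) f) := by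
  obtain ⟨N, hN⟩ := A.pd_bnd f
  have hbnd : Bnd (fun j => A.u (j + 1) * A.pd j f) N := fun k hk => by
    simp [hN k hk]
  rw [A.total_eq f, map_add, finsum_eq_range hbnd]
  rw [map_sum]
  have hterm : ∀ j, A.pd n (A.u (j + 1) * A.pd j f)
      = (if n = j + 1 then A.pd j f else 0) + A.u (j + 1) * A.pd j (A.pd n f) := by
    intro j
    rw [Derivation.leibniz]
    simp only [smul_eq_mul, A.pd_u, A.pd_comm n j]
    by_cases hn : n = j + 1 <;> simp [hn] <;> ring
  rw [Finset.sum_congr rfl (fun j _ => hterm j), Finset.sum_add_distrib]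
  have h2 : ∑ j ∈ Finset.range N, (if n = j + 1 then A.pd j f else 0)
      = (if n = 0 then 0 else A.pd (n - 1) f) := by
    cases n with
    | zero => simp
    | succ m =>
      simp only [Nat.succ_sub_one, if_neg (Nat.succ_ne_zero m)]
      have hc : ∀ j, (if m + 1 = j + 1 then A.pd j f else 0) = if j = m then A.pd j f else 0 := by
        intro j; by_cases hj : j = m
        · simp [hj]
        · rw [if_neg (by omega), if_neg hj]
      rw [Finset.sum_congr rfl fun j _ => hc j,
        Finset.sum_ite_eq' (Finset.range N) m (fun j => A.pd j f)]
      by_cases hm : m ∈ Finset.range N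
      · rw [if_pos hm]
      · rw [if_neg hm]; exact (hN m (by simpa using hm)).symm
  have hbnd2 : Bnd (fun j => A.u (j + 1) * A.pd j (A.pd n f)) N := fun k hk => by
    show A.u (k + 1) * A.pd k (A.pd n f) = 0
    rw [A.pd_comm, show A.pd k f = 0 from hN k hk, map_zero, mul_zero]
  rw [h2, A.total_eq (A.pd n f), finsum_eq_range hbnd2, A.pd_dx]
  ring

/-- Leibniz rule for iterated total derivative. -/
lemma Dn_mul (n : ℕ) (x y : V) :
    A.Dn n (x * y) = ∑ i ∈ Finset.range (n + 1),
      (n.choose i : ℤ) • (A.Dn i x * A.Dn (n - i) y) := by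
  induction n generalizing x y with
  | zero => simp
  | succ n ih =>
    rw [Dn_succ, total_mul, Dn_add, ih, ih]
    have e1 : ∑ i ∈ Finset.range (n + 1), (n.choose i : ℤ) • (A.Dn i (A.total x) * A.Dn (n - i) y)
        = ∑ i ∈ Finset.range (n + 1), (n.choose i : ℤ) • (A.Dn (i+1) x * A.Dn (n - i) y) := by
      refine Finset.sum_congr rfl fun i _ => by rw [← Dn_succ]
    have e2 : ∑ i ∈ Finset.range (n + 1), (n.choose i : ℤ) • (A.Dn i x * A.Dn (n - i) (A.total y))
        = ∑ i ∈ Finset.range (n + 1), (n.choose i : ℤ) • (A.Dn i x * A.Dn (n + 1 - i) y) := by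
      refine Finset.sum_congr rfl fun i hi => ?_
      have hi' : i ≤ n := by have := Finset.mem_range.mp hi; omega
      rw [← Dn_succ]
      have : n - i + 1 = n + 1 - i := by omega
      rw [this]
    rw [e1, e2]
    have e3 : ∑ i ∈ Finset.range (n + 1 + 1), (((n+1).choose i : ℤ)) • (A.Dn i x * A.Dn (n + 1 - i) y)
        = (∑ i ∈ Finset.range (n + 1), (((n.choose i : ℤ)) • (A.Dn (i+1) x * A.Dn (n - i) y)
            + ((n.choose (i+1) : ℤ)) • (A.Dn (i+1) x * A.Dn (n - i) y)))
          + x * A.Dn (n + 1) y := by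
      rw [Finset.sum_range_succ']
      congr 1
      · refine Finset.sum_congr rfl fun i _ => ?_
        have h1 : n + 1 - (i + 1) = n - i := by omega
        have h2 : (((n+1).choose (i+1) : ℕ) : ℤ) = (n.choose i : ℤ) + (n.choose (i+1) : ℤ) := by
          rw [Nat.choose_succ_succ' n i]; push_cast; ring
        rw [h1, h2, add_smul]
      · simp
    rw [e3, Finset.sum_add_distrib]
    have e4 : ∑ i ∈ Finset.range (n + 1), ((n.choose i : ℤ)) • (A.Dn i x * A.Dn (n + 1 - i) y)
        = (∑ i ∈ Finset.range (n + 1), ((n.choose (i+1) : ℤ)) • (A.Dn (i+1) x * A.Dn (n - i) y))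
          + x * A.Dn (n + 1) y := by
      rw [Finset.sum_range_succ' (fun i => ((n.choose i : ℤ)) • (A.Dn i x * A.Dn (n + 1 - i) y)) n]
      rw [Finset.sum_range_succ (fun i => ((n.choose (i+1) : ℤ)) • (A.Dn (i+1) x * A.Dn (n - i) y)) n]
      simp only [Nat.choose_succ_self, Nat.cast_zero, zero_smul, add_zero,
        Nat.choose_zero_right, Nat.cast_one, one_smul, Dn_zero, Nat.add_sub_cancel, Nat.sub_zero]
      congr 1
      refine Finset.sum_congr rfl fun i _ => ?_
      have h1 : n + 1 - (i + 1) = n - i := by omega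
      rw [h1]
    rw [e4]
    abel

end DiffAlg
namespace DiffAlg
open Function Finset

set_option linter.unusedSectionVars false

variable {V : Type} [CommRing V] [Algebra ℂ V] (A : DiffAlg V)

lemma Bnd.pd_add {x y : V} {N : ℕ} (hx : Bnd (fun n => A.pd n x) N)
    (hy : Bnd (fun n => A.pd n y) N) : Bnd (fun n => A.pd n (x + y)) N := by
  intro k hk
  show A.pd k (x + y) = 0
  rw [map_add, show A.pd k x = 0 from hx k hk, show A.pd k y = 0 from hy k hk, add_zero]

lemma evf_eq {f : V} {N : ℕ} (hf : Bnd (fun n => A.pd n f) N) (F : V) :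
    evf A F f = ∑ n ∈ Finset.range N, A.Dn n F * A.pd n f := by
  rw [evf]
  simp only [Dn_def]
  exact finsum_eq_range (fun k hk => by rw [show A.pd k f = 0 from hf k hk, mul_zero])

lemma opApp_eq {c : ℕ → V} {N : ℕ} (hc : Bnd c N) (g : V) :
    opApp A c g = ∑ k ∈ Finset.range N, c k * A.Dn k g := by
  rw [opApp]
  simp only [Dn_def]
  exact finsum_eq_range (fun k hk => by rw [hc k hk, zero_mul])

lemma adjApp_eq {c : ℕ → V} {N : ℕ} (hc : Bnd c N) (x : V) :
    adjApp A c x = ∑ j ∈ Finset.range N, ((-1 : ℤ) ^ j) • A.Dn j (c j * x) := by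
  rw [adjApp]
  simp only [Dn_def]
  exact finsum_eq_range (fun k hk => by rw [hc k hk, zero_mul, Dn_zero_elem, smul_zero])

lemma dafC_eq {c : ℕ → V} {N : ℕ} (hc : Bnd c N) (F : V) (j : ℕ) :
    dafC A c F j = ∑ k ∈ Finset.range N, A.Dn k F * A.pd j (c k) := by
  rw [dafC]
  simp only [Dn_def]
  exact finsum_eq_range (fun k hk => by rw [hc k hk, map_zero, mul_zero])

lemma adjC_eq {c : ℕ → V} {N : ℕ} (hc : Bnd c N) (j : ℕ) :
    adjC A c j = ∑ m ∈ Finset.range N,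
      (if j ≤ m then (((-1 : ℤ) ^ m * (m.choose (m - j)) : ℤ)) • A.Dn (m - j) (c m) else 0) := by
  rw [adjC]
  simp only [Dn_def]
  refine finsum_eq_range (fun m hm => ?_)
  rw [hc m hm]
  simp [Dn_zero_elem]

lemma frechApp_eq {F : V} {N : ℕ} (hF : Bnd (fun n => A.pd n F) N) (G : V) :
    frechApp A F G = ∑ m ∈ Finset.range N, A.pd m F * A.Dn m G := by
  rw [frechApp]
  simp only [Dn_def]
  exact finsum_eq_range (fun k hk => by rw [show A.pd k F = 0 from hF k hk, zero_mul])

lemma Bnd_adjC {c : ℕ → V} {N : ℕ} (hc : Bnd c N) : Bnd (adjC A c) N := by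
  intro j hj
  show adjC A c j = 0
  rw [adjC_eq A hc]
  refine Finset.sum_eq_zero fun m hm => ?_
  have : ¬ j ≤ m := by have := Finset.mem_range.mp hm; omega
  rw [if_neg this]

lemma exists_bnd_forall (s : Finset ℕ) (g : ℕ → V) :
    ∃ M, ∀ k ∈ s, Bnd (fun j => A.pd j (g k)) M := by
  classical
  induction s using Finset.induction with
  | empty => exact ⟨0, by simp⟩
  | @insert x s hx ih =>
    obtain ⟨M, hM⟩ := ih
    obtain ⟨M', hM'⟩ := A.pd_bnd (g x)
    refine ⟨max M M', fun k hk => ?_⟩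
    rcases Finset.mem_insert.mp hk with rfl | hk
    · exact hM'.mono (le_max_right _ _)
    · exact (hM k hk).mono (le_max_left _ _)

lemma Bnd_dafC {c : ℕ → V} {N M : ℕ} (hc : Bnd c N)
    (hM : ∀ k ∈ Finset.range N, Bnd (fun j => A.pd j (c k)) M) (F : V) :
    Bnd (dafC A c F) M := by
  intro j hj
  show dafC A c F j = 0
  rw [dafC_eq A hc]
  refine Finset.sum_eq_zero fun k hk => ?_
  rw [show A.pd j (c k) = 0 from hM k hk j hj, mul_zero]

lemma Bnd_evfC {c : ℕ → V} {N : ℕ} (hc : Bnd c N) (K : V) :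
    Bnd (fun j => evf A K (c j)) N := by
  intro j hj
  show evf A K (c j) = 0
  rw [hc j hj, evf]
  have : ∀ n, (fun x => A.total x)^[n] K * A.pd n (0 : V) = 0 := by
    intro n; rw [map_zero, mul_zero]
  rw [finsum_congr this, finsum_zero]

lemma evf_zero_arg (K : V) : evf A K 0 = 0 := by
  rw [evf]
  have : ∀ n, (fun x => A.total x)^[n] K * A.pd n (0 : V) = 0 := by
    intro n; rw [map_zero, mul_zero]
  rw [finsum_congr this, finsum_zero]

lemma evf_add_arg (K x y : V) : evf A K (x + y) = evf A K x + evf A K y := by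
  obtain ⟨N₁, h₁⟩ := A.pd_bnd x
  obtain ⟨N₂, h₂⟩ := A.pd_bnd y
  set N := max N₁ N₂
  have hx : Bnd (fun n => A.pd n x) N := h₁.mono (le_max_left _ _)
  have hy : Bnd (fun n => A.pd n y) N := h₂.mono (le_max_right _ _)
  rw [evf_eq A (hx.pd_add A hy), evf_eq A hx, evf_eq A hy, ← Finset.sum_add_distrib]
  refine Finset.sum_congr rfl fun n _ => ?_
  rw [map_add]
  ring

lemma evf_neg_arg (K x : V) : evf A K (-x) = - evf A K x := by
  have := A.evf_add_arg K x (-x)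
  rw [add_neg_cancel, evf_zero_arg] at this
  linear_combination -this

lemma evf_sub_arg (K x y : V) : evf A K (x - y) = evf A K x - evf A K y := by
  rw [sub_eq_add_neg, evf_add_arg, evf_neg_arg, sub_eq_add_neg]

lemma evf_mul_arg (K x y : V) : evf A K (x * y) = evf A K x * y + x * evf A K y := by
  obtain ⟨N₁, h₁⟩ := A.pd_bnd x
  obtain ⟨N₂, h₂⟩ := A.pd_bnd y
  set N := max N₁ N₂
  have hx : Bnd (fun n => A.pd n x) N := h₁.mono (le_max_left _ _)
  have hy : Bnd (fun n => A.pd n y) N := h₂.mono (le_max_right _ _)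
  have hxy : Bnd (fun n => A.pd n (x * y)) N := by
    intro k hk
    show A.pd k (x * y) = 0
    rw [Derivation.leibniz]
    rw [show A.pd k x = 0 from hx k hk, show A.pd k y = 0 from hy k hk]
    simp
  rw [evf_eq A hxy, evf_eq A hx, evf_eq A hy]
  rw [Finset.sum_mul, Finset.mul_sum, ← Finset.sum_add_distrib]
  refine Finset.sum_congr rfl fun n _ => ?_
  rw [Derivation.leibniz]
  simp only [smul_eq_mul]
  ring

lemma evf_total (K f : V) : evf A K (A.total f) = A.total (evf A K f) := by
  obtain ⟨N, hN⟩ := A.pd_bnd f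
  have htot : Bnd (fun n => A.pd n (A.total f)) (N + 1) := by
    intro k hk
    show A.pd k (A.total f) = 0
    rw [pd_total]
    rw [show A.pd k f = 0 from hN k (by omega), map_zero]
    have : ¬ (k = 0) := by omega
    rw [if_neg this, show A.pd (k-1) f = 0 from hN (k-1) (by omega), zero_add]
  rw [evf_eq A htot, evf_eq A (hN.mono (Nat.le_succ N))]
  have hterm : ∀ n, A.Dn n K * A.pd n (A.total f)
      = A.Dn n K * A.total (A.pd n f) + A.Dn n K * (if n = 0 then 0 else A.pd (n-1) f) := by
    intro n; rw [pd_total, mul_add]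
  rw [Finset.sum_congr rfl (fun n _ => hterm n), Finset.sum_add_distrib]
  have h2 : ∑ n ∈ Finset.range (N+1), A.Dn n K * (if n = 0 then 0 else A.pd (n-1) f)
      = ∑ i ∈ Finset.range N, A.Dn (i+1) K * A.pd i f := by
    rw [Finset.sum_range_succ' (fun n => A.Dn n K * (if n = 0 then 0 else A.pd (n-1) f)) N]
    simp
  rw [h2, map_sum]
  have h3 : ∀ n, A.total (A.Dn n K * A.pd n f)
      = A.Dn (n+1) K * A.pd n f + A.Dn n K * A.total (A.pd n f) := by
    intro n; rw [total_mul, Dn_succ']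
  rw [Finset.sum_congr rfl (fun n _ => h3 n), Finset.sum_add_distrib]
  have h4 : ∑ n ∈ Finset.range (N+1), A.Dn (n+1) K * A.pd n f
      = ∑ n ∈ Finset.range N, A.Dn (n+1) K * A.pd n f := by
    rw [Finset.sum_range_succ, show A.pd N f = 0 from hN N le_rfl, mul_zero, add_zero]
  rw [h4]
  ring

lemma evf_Dn (K : V) (k : ℕ) (f : V) : evf A K (A.Dn k f) = A.Dn k (evf A K f) := by
  induction k generalizing f with
  | zero => rfl
  | succ k ih => rw [Dn_succ, ih, Dn_succ, evf_total]

lemma evf_sum_arg (K : V) {ι : Type*} (s : Finset ι) (f : ι → V) :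
    evf A K (∑ i ∈ s, f i) = ∑ i ∈ s, evf A K (f i) := by
  classical
  induction s using Finset.induction with
  | empty => simp [evf_zero_arg]
  | insert _ _ hx ih => rw [Finset.sum_insert hx, Finset.sum_insert hx, evf_add_arg, ih]

end DiffAlg
namespace DiffAlg
open Function Finset

set_option linter.unusedSectionVars false

variable {V : Type} [CommRing V] [Algebra ℂ V] (A : DiffAlg V)

/- congruence lemmas -/
lemma opApp_congrC {c d : ℕ → V} (h : ∀ k, c k = d k) (g : V) :
    opApp A c g = opApp A d g := by
  rw [opApp, opApp]; exact finsum_congr fun k => by rw [h k]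

lemma adjApp_congrC {c d : ℕ → V} (h : ∀ k, c k = d k) (x : V) :
    adjApp A c x = adjApp A d x := by
  rw [adjApp, adjApp]; exact finsum_congr fun k => by rw [h k]

lemma dafC_congrC {c d : ℕ → V} (h : ∀ k, c k = d k) (F : V) (j : ℕ) :
    dafC A c F j = dafC A d F j := by
  rw [dafC, dafC]; exact finsum_congr fun k => by rw [h k]

lemma adjC_congrC {c d : ℕ → V} (h : ∀ k, c k = d k) (j : ℕ) :
    adjC A c j = adjC A d j := by
  rw [adjC, adjC]; exact finsum_congr fun m => by rw [h m]

lemma adjApp_zeroC (x : V) : adjApp A (fun _ => (0 : V)) x = 0 := by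
  rw [adjApp]
  have : ∀ j : ℕ, ((-1 : ℤ) ^ j) • (fun x => A.total x)^[j] ((0 : V) * x) = 0 := by
    intro j; rw [zero_mul, Dn_def, Dn_zero_elem, smul_zero]
  rw [finsum_congr this, finsum_zero]

lemma opApp_zeroC (g : V) : opApp A (fun _ => (0 : V)) g = 0 := by
  rw [opApp]
  have : ∀ j : ℕ, (0 : V) * (fun x => A.total x)^[j] g = 0 := fun j => zero_mul _
  rw [finsum_congr this, finsum_zero]

/- additivity in coefficients -/
lemma opApp_addC {c d : ℕ → V} {N : ℕ} (hc : Bnd c N) (hd : Bnd d N) (g : V) :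
    opApp A (fun k => c k + d k) g = opApp A c g + opApp A d g := by
  have hcd : Bnd (fun k => c k + d k) N := fun k hk => by
    show c k + d k = 0; rw [hc k hk, hd k hk, add_zero]
  rw [opApp_eq A hcd, opApp_eq A hc, opApp_eq A hd, ← Finset.sum_add_distrib]
  exact Finset.sum_congr rfl fun k _ => by ring

lemma opApp_negC (c : ℕ → V) (g : V) :
    opApp A (fun k => -(c k)) g = - opApp A c g := by
  rw [opApp, opApp, ← finsum_neg_distrib]
  exact finsum_congr fun k => by ring

lemma opApp_subC {c d : ℕ → V} {N : ℕ} (hc : Bnd c N) (hd : Bnd d N) (g : V) :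
    opApp A (fun k => c k - d k) g = opApp A c g - opApp A d g := by
  have h1 : ∀ k, c k - d k = c k + -(d k) := fun k => by ring
  rw [opApp_congrC A h1, opApp_addC A hc (fun k hk => by show -(d k) = 0; rw [hd k hk, neg_zero]),
    opApp_negC, sub_eq_add_neg]

lemma adjApp_addC {c d : ℕ → V} {N : ℕ} (hc : Bnd c N) (hd : Bnd d N) (x : V) :
    adjApp A (fun k => c k + d k) x = adjApp A c x + adjApp A d x := by
  have hcd : Bnd (fun k => c k + d k) N := fun k hk => by
    show c k + d k = 0; rw [hc k hk, hd k hk, add_zero]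
  rw [adjApp_eq A hcd, adjApp_eq A hc, adjApp_eq A hd, ← Finset.sum_add_distrib]
  refine Finset.sum_congr rfl fun k _ => ?_
  rw [add_mul, Dn_add, smul_add]

lemma adjApp_negC (c : ℕ → V) (x : V) :
    adjApp A (fun k => -(c k)) x = - adjApp A c x := by
  rw [adjApp, adjApp, ← finsum_neg_distrib]
  refine finsum_congr fun k => ?_
  rw [neg_mul, Dn_def, Dn_def, Dn_neg, smul_neg]

/- linearity in argument -/
lemma opApp_add_arg {c : ℕ → V} {N : ℕ} (hc : Bnd c N) (x y : V) :
    opApp A c (x + y) = opApp A c x + opApp A c y := by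
  rw [opApp_eq A hc, opApp_eq A hc, opApp_eq A hc, ← Finset.sum_add_distrib]
  exact Finset.sum_congr rfl fun k _ => by rw [Dn_add, mul_add]

lemma opApp_neg_arg (c : ℕ → V) (x : V) :
    opApp A c (-x) = - opApp A c x := by
  rw [opApp, opApp, ← finsum_neg_distrib]
  exact finsum_congr fun k => by rw [Dn_def, Dn_def, Dn_neg, mul_neg]

lemma opApp_sub_arg {c : ℕ → V} {N : ℕ} (hc : Bnd c N) (x y : V) :
    opApp A c (x - y) = opApp A c x - opApp A c y := by
  rw [sub_eq_add_neg, opApp_add_arg A hc, opApp_neg_arg, sub_eq_add_neg]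

lemma adjApp_add_arg {c : ℕ → V} {N : ℕ} (hc : Bnd c N) (x y : V) :
    adjApp A c (x + y) = adjApp A c x + adjApp A c y := by
  rw [adjApp_eq A hc, adjApp_eq A hc, adjApp_eq A hc, ← Finset.sum_add_distrib]
  refine Finset.sum_congr rfl fun k _ => ?_
  rw [mul_add, Dn_add, smul_add]

lemma adjApp_neg_arg (c : ℕ → V) (x : V) :
    adjApp A c (-x) = - adjApp A c x := by
  rw [adjApp, adjApp, ← finsum_neg_distrib]
  refine finsum_congr fun k => ?_
  rw [mul_neg, Dn_def, Dn_def, Dn_neg, smul_neg]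

lemma adjApp_zsmul_arg {c : ℕ → V} {N : ℕ} (hc : Bnd c N) (z : ℤ) (x : V) :
    adjApp A c (z • x) = z • adjApp A c x := by
  rw [adjApp_eq A hc, adjApp_eq A hc, Finset.smul_sum]
  refine Finset.sum_congr rfl fun k _ => ?_
  rw [mul_smul_comm, Dn_zsmul, smul_comm]

lemma adjApp_sum_arg {c : ℕ → V} {N : ℕ} (hc : Bnd c N) {ι : Type*} (s : Finset ι) (f : ι → V) :
    adjApp A c (∑ i ∈ s, f i) = ∑ i ∈ s, adjApp A c (f i) := by
  classical
  induction s using Finset.induction with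
  | empty =>
    simp only [Finset.sum_empty]
    rw [adjApp_eq A hc]
    refine (Finset.sum_eq_zero fun k _ => ?_)
    rw [mul_zero, Dn_zero_elem, smul_zero]
  | insert _ _ hx ih =>
    rw [Finset.sum_insert hx, Finset.sum_insert hx, adjApp_add_arg A hc, ih]

lemma adjApp_sumC {ι : Type*} (s : Finset ι) (w : ι → ℕ → V) {N : ℕ}
    (hw : ∀ i ∈ s, Bnd (w i) N) (x : V) :
    adjApp A (fun m => ∑ i ∈ s, w i m) x = ∑ i ∈ s, adjApp A (w i) x := by
  classical
  induction s using Finset.induction with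
  | empty => simp [adjApp_zeroC]
  | @insert a s ha ih =>
    have h1 : ∀ m, (∑ i ∈ insert a s, w i m) = w a m + ∑ i ∈ s, w i m := fun m =>
      Finset.sum_insert ha
    have hsum : Bnd (fun m => ∑ i ∈ s, w i m) N := fun k hk => by
      show (∑ i ∈ s, w i k) = 0
      exact Finset.sum_eq_zero fun i hi => hw i (Finset.mem_insert_of_mem hi) k hk
    rw [adjApp_congrC A h1, adjApp_addC A (hw a (Finset.mem_insert_self a s)) hsum,
      ih (fun i hi => hw i (Finset.mem_insert_of_mem hi)), Finset.sum_insert ha]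

/-- Key shift lemma: the adjoint-style sum of the "compose with ∂" family. -/
lemma adjApp_shiftC {w : ℕ → V} {N : ℕ} (hw : Bnd w N) (y : V) :
    adjApp A (fun j => A.total (w j) + (if j = 0 then 0 else w (j - 1))) y
      = - adjApp A w (A.total y) := by
  have hb : Bnd (fun j => A.total (w j) + (if j = 0 then 0 else w (j - 1))) (N + 1) := by
    intro k hk
    show A.total (w k) + (if k = 0 then 0 else w (k - 1)) = 0
    rw [hw k (by omega), map_zero, if_neg (by omega), hw (k-1) (by omega), add_zero]
  rw [adjApp_eq A hb, adjApp_eq A hw]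
  have hterm : ∀ j, ((-1 : ℤ) ^ j) • A.Dn j ((A.total (w j) + (if j = 0 then 0 else w (j - 1))) * y)
      = ((-1 : ℤ) ^ j) • A.Dn j (A.total (w j) * y)
        + ((-1 : ℤ) ^ j) • A.Dn j ((if j = 0 then 0 else w (j - 1)) * y) := by
    intro j; rw [add_mul, Dn_add, smul_add]
  rw [Finset.sum_congr rfl fun j _ => hterm j, Finset.sum_add_distrib]
  have h2 : ∑ j ∈ Finset.range (N + 1),
      ((-1 : ℤ) ^ j) • A.Dn j ((if j = 0 then 0 else w (j - 1)) * y)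
      = ∑ i ∈ Finset.range N, ((-1 : ℤ) ^ (i+1)) • A.Dn (i+1) (w i * y) := by
    rw [Finset.sum_range_succ' (fun j => ((-1 : ℤ) ^ j) • A.Dn j ((if j = 0 then 0 else w (j - 1)) * y)) N]
    simp
  have h3 : ∑ j ∈ Finset.range (N + 1), ((-1 : ℤ) ^ j) • A.Dn j (A.total (w j) * y)
      = ∑ j ∈ Finset.range N, ((-1 : ℤ) ^ j) • A.Dn j (A.total (w j) * y) := by
    rw [Finset.sum_range_succ, hw N le_rfl, map_zero, zero_mul, Dn_zero_elem, smul_zero, add_zero]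
  rw [h2, h3, ← Finset.sum_add_distrib, ← Finset.sum_neg_distrib]
  refine Finset.sum_congr rfl fun i _ => ?_
  rw [Dn_succ, total_mul, pow_succ, Dn_add]
  rw [mul_neg_one, neg_smul, smul_add]
  abel

end DiffAlg
namespace DiffAlg
open Function Finset

set_option linter.unusedSectionVars false

variable {V : Type} [CommRing V] [Algebra ℂ V] (A : DiffAlg V)

/-- Lemma A: the two representations of the adjoint agree. -/
lemma adjApp_eq_opApp_adjC {c : ℕ → V} {N : ℕ} (hc : Bnd c N) (x : V) :
    adjApp A c x = opApp A (adjC A c) x := by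
  rw [adjApp_eq A hc, opApp_eq A (Bnd_adjC A hc)]
  have step1 : ∀ j ∈ Finset.range N, ((-1 : ℤ) ^ j) • A.Dn j (c j * x)
      = ∑ l ∈ Finset.range N, (if l ≤ j then
          (((-1 : ℤ) ^ j * (j.choose (j - l)) : ℤ)) • (A.Dn (j - l) (c j) * A.Dn l x) else 0) := by
    intro j hj
    have hjN : j + 1 ≤ N := Finset.mem_range.mp hj
    rw [Dn_mul, Finset.smul_sum]
    have e1 : ∀ i, ((-1 : ℤ) ^ j) • ((j.choose i : ℤ) • (A.Dn i (c j) * A.Dn (j - i) x))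
        = (((-1 : ℤ) ^ j * (j.choose i : ℤ))) • (A.Dn i (c j) * A.Dn (j - i) x) := by
      intro i; rw [smul_smul]
    rw [Finset.sum_congr rfl fun i _ => e1 i]
    rw [← Finset.sum_range_reflect
      (fun i => (((-1 : ℤ) ^ j * (j.choose i : ℤ))) • (A.Dn i (c j) * A.Dn (j - i) x)) (j+1)]
    have e2 : ∀ l ∈ Finset.range (j+1),
        (((-1 : ℤ) ^ j * (j.choose (j + 1 - 1 - l) : ℤ))) • (A.Dn (j + 1 - 1 - l) (c j) * A.Dn (j - (j + 1 - 1 - l)) x)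
        = (if l ≤ j then (((-1 : ℤ) ^ j * (j.choose (j - l)) : ℤ)) • (A.Dn (j - l) (c j) * A.Dn l x) else 0) := by
      intro l hl
      have hlj : l ≤ j := by have := Finset.mem_range.mp hl; omega
      rw [if_pos hlj]
      have e3 : j + 1 - 1 - l = j - l := by omega
      have e4 : j - (j - l) = l := by omega
      rw [e3, e4]
    rw [Finset.sum_congr rfl e2]
    refine Finset.sum_subset (Finset.range_subset_range.mpr hjN) fun l _ hl => ?_
    have : ¬ l ≤ j := by
      intro hc'
      exact hl (Finset.mem_range.mpr (by omega))
    rw [if_neg this]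
  rw [Finset.sum_congr rfl step1, Finset.sum_comm]
  refine Finset.sum_congr rfl fun l _ => ?_
  rw [adjC_eq A hc, Finset.sum_mul]
  refine Finset.sum_congr rfl fun j _ => ?_
  rw [ite_mul, zero_mul, smul_mul_assoc]

/-- Induction engine: `(∂^k)* ∘ (pd-family)` style lemma. -/
lemma adjApp_pd_Dn (k : ℕ) (F y : V) :
    adjApp A (fun m => A.pd m (A.Dn k F)) y
      = adjApp A (fun m => A.pd m F) (((-1 : ℤ) ^ k) • A.Dn k y) := by
  induction k generalizing y with
  | zero => simp
  | succ k ih =>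
    obtain ⟨N, hw⟩ := A.pd_bnd (A.Dn k F)
    have hcong : ∀ m, A.pd m (A.Dn (k+1) F)
        = -(A.total (-(A.pd m (A.Dn k F))) + (if m = 0 then 0 else -(A.pd (m-1) (A.Dn k F)))) := by
      intro m
      rw [Dn_succ', pd_total]
      by_cases hm : m = 0
      · simp [hm]
      · simp only [if_neg hm]
        rw [map_neg]
        ring
    rw [adjApp_congrC A hcong, adjApp_negC A
      (fun j => A.total (-(A.pd j (A.Dn k F))) + (if j = 0 then 0 else -(A.pd (j-1) (A.Dn k F))))]
    have hw' : Bnd (fun m => -(A.pd m (A.Dn k F))) N := fun m hm => by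
      show -(A.pd m (A.Dn k F)) = 0
      rw [show A.pd m (A.Dn k F) = 0 from hw m hm, neg_zero]
    rw [adjApp_shiftC A hw' y, neg_neg, adjApp_negC, ih (A.total y)]
    obtain ⟨M, hF⟩ := A.pd_bnd F
    rw [adjApp_zsmul_arg A hF, adjApp_zsmul_arg A hF, Dn_succ, pow_succ, mul_neg_one, neg_smul]

end DiffAlg
namespace DiffAlg
open Function Finset

set_option linter.unusedSectionVars false

variable {V : Type} [CommRing V] [Algebra ℂ V] (A : DiffAlg V)

/-- single-coefficient operator -/
def sing (k : ℕ) (b : V) : ℕ → V := fun k' => if k' = k then b else 0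

lemma Bnd_sing (k : ℕ) (b : V) : Bnd (sing k b : ℕ → V) (k + 1) := fun j hj => by
  show (if j = k then b else 0) = 0
  rw [if_neg (by omega)]

lemma sing_self (k : ℕ) (b : V) : sing k b k = b := if_pos rfl

lemma dafC_sing (k : ℕ) (b F : V) (j : ℕ) :
    dafC A (sing k b) F j = A.Dn k F * A.pd j b := by
  rw [dafC_eq A (Bnd_sing k b)]
  rw [Finset.sum_eq_single_of_mem k (Finset.self_mem_range_succ k)]
  · rw [sing_self]
  · intro i _ hik
    rw [show sing k b i = 0 from if_neg hik, map_zero, mul_zero]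

lemma adjC_sing (k : ℕ) (b : V) (j : ℕ) :
    adjC A (sing k b) j
      = if j ≤ k then (((-1 : ℤ) ^ k * (k.choose (k - j)) : ℤ)) • A.Dn (k - j) b else 0 := by
  rw [adjC_eq A (Bnd_sing k b)]
  rw [Finset.sum_eq_single_of_mem k (Finset.self_mem_range_succ k)]
  · rw [sing_self]
  · intro i _ hik
    rw [show sing k b i = 0 from if_neg hik]
    by_cases hji : j ≤ i
    · rw [if_pos hji, Dn_zero_elem, smul_zero]
    · rw [if_neg hji]

lemma adjC_sing_zero (b : V) (j : ℕ) : adjC A (sing 0 b) j = sing 0 b j := by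
  rw [adjC_sing]
  unfold sing
  by_cases hj : j = 0
  · subst hj; simp
  · rw [if_neg (by omega), if_neg hj]

lemma adjC_sing_succ (k : ℕ) (b : V) (j : ℕ) :
    adjC A (sing (k+1) b) j
      = -A.total (adjC A (sing k b) j) - (if j = 0 then 0 else adjC A (sing k b) (j-1)) := by
  rw [adjC_sing, adjC_sing]
  by_cases hj0 : j = 0
  · subst hj0
    rw [if_pos (Nat.zero_le _), if_pos (Nat.zero_le _), if_pos rfl, sub_zero]
    simp only [Nat.sub_zero, Nat.choose_self, Nat.cast_one, mul_one]
    rw [map_zsmul, ← Dn_succ', pow_succ, mul_neg_one, neg_smul]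
  · rw [if_neg hj0, adjC_sing]
    by_cases hjk : j ≤ k
    · rw [if_pos (by omega), if_pos hjk, if_pos (by omega)]
      have e1 : k - (j - 1) = (k - j) + 1 := by omega
      have e2 : k + 1 - j = (k - j) + 1 := by omega
      rw [e1, e2, map_zsmul, ← Dn_succ']
      have e3 : (k+1).choose ((k-j)+1) = k.choose (k-j) + k.choose ((k-j)+1) :=
        Nat.choose_succ_succ' k (k-j)
      rw [e3]
      push_cast
      rw [mul_add, add_smul, pow_succ]
      rw [show ((-1:ℤ)^k * -1 * (k.choose (k-j) : ℤ)) = -((-1:ℤ)^k * (k.choose (k-j):ℤ)) from by ring]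
      rw [show ((-1:ℤ)^k * -1 * (k.choose (k-j+1) : ℤ)) = -((-1:ℤ)^k * (k.choose (k-j+1):ℤ)) from by ring]
      rw [neg_smul, neg_smul]
      abel
    · by_cases hjk1 : j ≤ k + 1
      · have hjeq : j = k + 1 := by omega
        subst hjeq
        rw [if_pos le_rfl, if_neg hjk, if_pos (by omega)]
        simp only [Nat.sub_self, Nat.add_sub_cancel, Nat.choose_zero_right, Nat.cast_one,
          mul_one, Dn_zero, map_zero, neg_zero, zero_sub]
        rw [pow_succ, mul_neg_one, neg_smul]
      · rw [if_neg hjk1, if_neg hjk, if_neg (by omega : ¬ j - 1 ≤ k)]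
        simp

end DiffAlg
namespace DiffAlg
open Function Finset

set_option linter.unusedSectionVars false

variable {V : Type} [CommRing V] [Algebra ℂ V] (A : DiffAlg V)

lemma dafC_shiftUpC {q : ℕ → V} {N : ℕ} (hq : Bnd q N) (F : V) (j : ℕ) :
    dafC A (fun l => if l = 0 then 0 else q (l - 1)) F j = dafC A q (A.total F) j := by
  have hb : Bnd (fun l => if l = 0 then (0 : V) else q (l - 1)) (N + 1) := by
    intro l hl
    show (if l = 0 then (0 : V) else q (l - 1)) = 0
    rw [if_neg (by omega), hq (l-1) (by omega)]
  rw [dafC_eq A hb, dafC_eq A hq]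
  rw [Finset.sum_range_succ'
    (fun l => A.Dn l F * A.pd j (if l = 0 then (0 : V) else q (l - 1))) N]
  have e0 : A.Dn 0 F * A.pd j (if (0:ℕ) = 0 then (0 : V) else q (0 - 1)) = 0 := by
    rw [if_pos rfl, map_zero, mul_zero]
  rw [e0, add_zero]
  refine Finset.sum_congr rfl fun i _ => ?_
  rw [if_neg (Nat.succ_ne_zero i), Nat.add_sub_cancel, Dn_succ]

lemma dafC_derivC {c : ℕ → V} {N : ℕ} (hc : Bnd c N) (G : V) (j : ℕ) :
    dafC A (fun l => -A.total (c l) - (if l = 0 then 0 else c (l - 1))) G j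
      = -A.total (dafC A c G j) - (if j = 0 then 0 else dafC A c G (j - 1)) := by
  have hb : Bnd (fun l => -A.total (c l) - (if l = 0 then (0:V) else c (l - 1))) (N + 1) := by
    intro l hl
    show -A.total (c l) - (if l = 0 then (0:V) else c (l - 1)) = 0
    rw [hc l (by omega), map_zero, neg_zero, if_neg (by omega), hc (l-1) (by omega), sub_zero]
  rw [dafC_eq A hb]
  have hterm : ∀ l, A.Dn l G * A.pd j (-A.total (c l) - (if l = 0 then (0:V) else c (l - 1)))
      = (-(A.total (A.Dn l G * A.pd j (c l))) + A.Dn (l+1) G * A.pd j (c l))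
        + (-(if j = 0 then 0 else A.Dn l G * A.pd (j-1) (c l)))
        + (-(if l = 0 then 0 else A.Dn l G * A.pd j (c (l-1)))) := by
    intro l
    rw [map_sub, map_neg, pd_total]
    rw [apply_ite (A.pd j) (l = 0) (0 : V) (c (l-1)), map_zero]
    rw [total_mul, Dn_succ']
    by_cases hj : j = 0 <;> by_cases hl : l = 0 <;> simp [hj, hl] <;> ring
  rw [Finset.sum_congr rfl fun l _ => hterm l]
  rw [Finset.sum_add_distrib, Finset.sum_add_distrib, Finset.sum_add_distrib]
  have h1a : ∑ l ∈ Finset.range (N+1), -(A.total (A.Dn l G * A.pd j (c l)))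
      = -A.total (dafC A c G j) := by
    rw [Finset.sum_neg_distrib, ← map_sum, ← dafC_eq A (hc.mono (Nat.le_succ N))]
  have h1b : ∑ l ∈ Finset.range (N+1), A.Dn (l+1) G * A.pd j (c l)
      = ∑ l ∈ Finset.range N, A.Dn (l+1) G * A.pd j (c l) := by
    rw [Finset.sum_range_succ, hc N le_rfl, map_zero, mul_zero, add_zero]
  have h2 : ∑ l ∈ Finset.range (N+1), (-(if j = 0 then 0 else A.Dn l G * A.pd (j-1) (c l)))
      = -(if j = 0 then 0 else dafC A c G (j-1)) := by
    by_cases hj : j = 0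
    · simp [hj]
    · simp only [if_neg hj]
      rw [Finset.sum_neg_distrib, ← dafC_eq A (hc.mono (Nat.le_succ N))]
  have h4 : ∑ l ∈ Finset.range (N+1), (-(if l = 0 then (0:V) else A.Dn l G * A.pd j (c (l-1))))
      = -∑ i ∈ Finset.range N, A.Dn (i+1) G * A.pd j (c i) := by
    rw [Finset.sum_neg_distrib,
      Finset.sum_range_succ' (fun l => (if l = 0 then (0:V) else A.Dn l G * A.pd j (c (l-1)))) N]
    simp
  rw [h1a, h1b, h2, h4]
  abel

lemma adjApp_derivC {w : ℕ → V} {N : ℕ} (hw : Bnd w N) (F : V) :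
    adjApp A (fun j => -A.total (w j) - (if j = 0 then 0 else w (j - 1))) F
      = adjApp A w (A.total F) := by
  have hcong : ∀ j, -A.total (w j) - (if j = 0 then 0 else w (j - 1))
      = -((A.total (w j)) + (if j = 0 then 0 else w (j - 1))) := fun j => by ring
  rw [adjApp_congrC A hcong,
    adjApp_negC A (fun j => A.total (w j) + (if j = 0 then 0 else w (j - 1))),
    adjApp_shiftC A hw, neg_neg]

lemma dafC_addC {c d : ℕ → V} {N : ℕ} (hc : Bnd c N) (hd : Bnd d N) (F : V) (j : ℕ) :
    dafC A (fun k => c k + d k) F j = dafC A c F j + dafC A d F j := by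
  have hcd : Bnd (fun k => c k + d k) N := fun k hk => by
    show c k + d k = 0; rw [hc k hk, hd k hk, add_zero]
  rw [dafC_eq A hcd, dafC_eq A hc, dafC_eq A hd, ← Finset.sum_add_distrib]
  exact Finset.sum_congr rfl fun k _ => by rw [map_add, mul_add]

lemma adjC_addC {c d : ℕ → V} {N : ℕ} (hc : Bnd c N) (hd : Bnd d N) (j : ℕ) :
    adjC A (fun k => c k + d k) j = adjC A c j + adjC A d j := by
  have hcd : Bnd (fun k => c k + d k) N := fun k hk => by
    show c k + d k = 0; rw [hc k hk, hd k hk, add_zero]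
  rw [adjC_eq A hcd, adjC_eq A hc, adjC_eq A hd, ← Finset.sum_add_distrib]
  refine Finset.sum_congr rfl fun m _ => ?_
  by_cases hjm : j ≤ m
  · rw [if_pos hjm, if_pos hjm, if_pos hjm, Dn_add, smul_add]
  · rw [if_neg hjm, if_neg hjm, if_neg hjm, add_zero]

lemma Bnd_dafC' (c : ℕ → V) {N : ℕ} (hc : Bnd c N) (F : V) :
    ∃ M, Bnd (dafC A c F) M := by
  obtain ⟨M, hM⟩ := exists_bnd_forall A (Finset.range N) c
  exact ⟨M, Bnd_dafC A hc hM F⟩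

lemma P1_sing (k : ℕ) (b : V) :
    ∀ F G : V, adjApp A (dafC A (sing k b) F) G
      = adjApp A (dafC A (adjC A (sing k b)) G) F := by
  induction k with
  | zero =>
    intro F G
    have h1 : ∀ j, dafC A (sing 0 b) F j = F * A.pd j b := fun j => by
      rw [dafC_sing]; simp
    have h2 : ∀ j, dafC A (adjC A (sing 0 b)) G j = G * A.pd j b := fun j => by
      rw [dafC_congrC A (adjC_sing_zero A b), dafC_sing]; simp
    rw [adjApp_congrC A h1, adjApp_congrC A h2]
    rw [adjApp, adjApp]
    refine finsum_congr fun j => ?_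
    rw [show F * A.pd j b * G = G * A.pd j b * F from by ring]
  | succ k ih =>
    intro F G
    have hsing : ∀ l, sing (k+1) b l = (if l = 0 then 0 else sing k b (l - 1)) := by
      intro l
      by_cases hl : l = 0
      · subst hl; rw [if_pos rfl]; exact if_neg (by omega)
      · rw [if_neg hl]
        show (if l = k + 1 then b else 0) = (if l - 1 = k then b else 0)
        by_cases hlk : l = k + 1
        · rw [if_pos hlk, if_pos (by omega)]
        · rw [if_neg hlk, if_neg (by omega)]
    have hL : ∀ j, dafC A (sing (k+1) b) F j = dafC A (sing k b) (A.total F) j := by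
      intro j
      rw [dafC_congrC A hsing, dafC_shiftUpC A (Bnd_sing k b) F j]
    obtain ⟨M, hM⟩ := Bnd_dafC' A (adjC A (sing k b)) (Bnd_adjC A (Bnd_sing k b)) G
    have hR : ∀ j, dafC A (adjC A (sing (k+1) b)) G j
        = -A.total (dafC A (adjC A (sing k b)) G j)
          - (if j = 0 then 0 else dafC A (adjC A (sing k b)) G (j - 1)) := by
      intro j
      rw [dafC_congrC A (adjC_sing_succ A k b), dafC_derivC A (Bnd_adjC A (Bnd_sing k b)) G j]
    rw [adjApp_congrC A hL, ih (A.total F) G, adjApp_congrC A hR,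
      adjApp_derivC A hM F]

lemma P1_gen (N : ℕ) : ∀ (c : ℕ → V), Bnd c N → ∀ F G : V,
    adjApp A (dafC A c F) G = adjApp A (dafC A (adjC A c) G) F := by
  induction N with
  | zero =>
    intro c hc F G
    have h0 : ∀ j, dafC A c F j = 0 := fun j => by
      rw [dafC_eq A hc]; simp
    have h1 : ∀ j, dafC A (adjC A c) G j = 0 := fun j => by
      rw [dafC_eq A (Bnd_adjC A hc)]; simp
    rw [adjApp_congrC A h0, adjApp_congrC A h1, adjApp_zeroC, adjApp_zeroC]
  | succ N ih =>
    intro c hc F G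
    set c' : ℕ → V := fun l => if l = N then 0 else c l with hc'def
    have hc' : Bnd c' N := by
      intro l hl
      show (if l = N then 0 else c l) = 0
      by_cases hl2 : l = N
      · rw [if_pos hl2]
      · rw [if_neg hl2]; exact hc l (by omega)
    have hdec : ∀ l, c l = sing N (c N) l + c' l := by
      intro l
      show c l = (if l = N then c N else 0) + (if l = N then 0 else c l)
      by_cases hl : l = N <;> simp [hl]
    -- bounds
    obtain ⟨M1, hM1⟩ := Bnd_dafC' A (sing N (c N)) (Bnd_sing N (c N)) F
    obtain ⟨M2, hM2⟩ := Bnd_dafC' A c' hc' F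
    obtain ⟨M3, hM3⟩ := Bnd_dafC' A (adjC A (sing N (c N))) (Bnd_adjC A (Bnd_sing N (c N))) G
    obtain ⟨M4, hM4⟩ := Bnd_dafC' A (adjC A c') (Bnd_adjC A hc') G
    set M := max (max M1 M2) (max M3 M4)
    have hdafL : ∀ j, dafC A c F j = dafC A (sing N (c N)) F j + dafC A c' F j := by
      intro j
      rw [dafC_congrC A hdec, dafC_addC A ((Bnd_sing N (c N)).mono (le_refl _)) (hc'.mono (Nat.le_succ N)) F j]
    have hadjCsum : ∀ l, adjC A c l = adjC A (sing N (c N)) l + adjC A c' l := by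
      intro l
      rw [adjC_congrC A hdec, adjC_addC A ((Bnd_sing N (c N)).mono (le_refl _)) (hc'.mono (Nat.le_succ N)) l]
    have hdafR : ∀ j, dafC A (adjC A c) G j
        = dafC A (adjC A (sing N (c N))) G j + dafC A (adjC A c') G j := by
      intro j
      rw [dafC_congrC A hadjCsum, dafC_addC A ((Bnd_adjC A (Bnd_sing N (c N))).mono (le_refl _)) ((Bnd_adjC A hc').mono (Nat.le_succ N)) G j]
    rw [adjApp_congrC A hdafL,
      adjApp_addC A (hM1.mono (by omega : M1 ≤ M)) (hM2.mono (by omega : M2 ≤ M)) G,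
      P1_sing A N (c N) F G, ih c' hc' F G,
      adjApp_congrC A hdafR,
      adjApp_addC A (hM3.mono (by omega : M3 ≤ M)) (hM4.mono (by omega : M4 ≤ M)) F]

end DiffAlg
namespace DiffAlg
open Function Finset

set_option linter.unusedSectionVars false

variable {V : Type} [CommRing V] [Algebra ℂ V] (A : DiffAlg V)

lemma adjApp_mulC_arg (c : ℕ → V) (a x : V) :
    adjApp A (fun m => a * c m) x = adjApp A c (a * x) := by
  rw [adjApp, adjApp]
  exact finsum_congr fun m => by rw [show a * c m * x = c m * (a * x) from by ring]

lemma adjApp_q {h : ℕ → V} {N : ℕ} (hh : Bnd h N) (F g : V) :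
    adjApp A (fun m => ∑ k ∈ Finset.range N, h k * A.pd m (A.Dn k F)) g
      = adjApp A (fun m => A.pd m F)
          (∑ k ∈ Finset.range N, ((-1:ℤ)^k) • A.Dn k (h k * g)) := by
  obtain ⟨M0, hM0⟩ := exists_bnd_forall A (Finset.range N) (fun k => A.Dn k F)
  have hwB : ∀ k ∈ Finset.range N, Bnd (fun m => h k * A.pd m (A.Dn k F)) M0 := by
    intro k hk m hm
    show h k * A.pd m (A.Dn k F) = 0
    rw [show A.pd m (A.Dn k F) = 0 from hM0 k hk m hm, mul_zero]
  rw [adjApp_sumC A (Finset.range N) (fun k m => h k * A.pd m (A.Dn k F)) hwB g]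
  obtain ⟨MF, hMF⟩ := A.pd_bnd F
  rw [adjApp_sum_arg A hMF]
  refine Finset.sum_congr rfl fun k _ => ?_
  rw [adjApp_mulC_arg, adjApp_pd_Dn A k F (h k * g)]

lemma ADJ {h : ℕ → V} {N : ℕ} (hh : Bnd h N) (hskew : ∀ j, adjC A h j = -h j) (F g : V) :
    adjApp A (fun m => A.pd m (opApp A h F)) g
      + adjApp A (fun m => A.pd m F) (opApp A h g)
      = adjApp A (dafC A h F) g := by
  have hexp : ∀ m, A.pd m (opApp A h F)
      = dafC A h F m + ∑ k ∈ Finset.range N, h k * A.pd m (A.Dn k F) := by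
    intro m
    rw [opApp_eq A hh, map_sum, dafC_eq A hh, ← Finset.sum_add_distrib]
    refine Finset.sum_congr rfl fun k _ => ?_
    rw [Derivation.leibniz]
    simp only [smul_eq_mul]
    ring
  obtain ⟨M1, hM1⟩ := Bnd_dafC' A h hh F
  obtain ⟨M0, hM0⟩ := exists_bnd_forall A (Finset.range N) (fun k => A.Dn k F)
  have hq : Bnd (fun m => ∑ k ∈ Finset.range N, h k * A.pd m (A.Dn k F)) M0 := by
    intro m hm
    show (∑ k ∈ Finset.range N, h k * A.pd m (A.Dn k F)) = 0
    exact Finset.sum_eq_zero fun k hk => by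
      rw [show A.pd m (A.Dn k F) = 0 from hM0 k hk m hm, mul_zero]
  rw [adjApp_congrC A hexp,
    adjApp_addC A (hM1.mono (le_max_left M1 M0)) (hq.mono (le_max_right M1 M0)) g,
    adjApp_q A hh F g]
  have hsum : (∑ k ∈ Finset.range N, ((-1:ℤ)^k) • A.Dn k (h k * g)) = - opApp A h g := by
    rw [← adjApp_eq A hh g, adjApp_eq_opApp_adjC A hh, opApp_congrC A hskew, opApp_negC]
  rw [hsum, adjApp_neg_arg]
  abel

lemma evf_opApp (K : V) {c : ℕ → V} {N : ℕ} (hc : Bnd c N) (g : V) :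
    evf A K (opApp A c g)
      = opApp A (fun k => evf A K (c k)) g + opApp A c (evf A K g) := by
  rw [opApp_eq A hc, evf_sum_arg, opApp_eq A (Bnd_evfC A hc K), opApp_eq A hc,
    ← Finset.sum_add_distrib]
  refine Finset.sum_congr rfl fun k _ => ?_
  rw [evf_mul_arg, evf_Dn]

lemma opApp_evf_swap {c : ℕ → V} {N : ℕ} (hc : Bnd c N) (K F : V) :
    opApp A (fun k => evf A K (c k)) F = opApp A (dafC A c F) K := by
  obtain ⟨M, hM⟩ := exists_bnd_forall A (Finset.range N) c
  rw [opApp_eq A (Bnd_evfC A hc K), opApp_eq A (Bnd_dafC A hc hM F)]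
  have h1 : ∀ k ∈ Finset.range N, evf A K (c k) * A.Dn k F
      = ∑ j ∈ Finset.range M, A.Dn j K * A.pd j (c k) * A.Dn k F := by
    intro k hk
    rw [evf_eq A (hM k hk), Finset.sum_mul]
  rw [Finset.sum_congr rfl h1, Finset.sum_comm]
  refine Finset.sum_congr rfl fun j _ => ?_
  rw [dafC_eq A hc, Finset.sum_mul]
  exact Finset.sum_congr rfl fun k _ => by ring

lemma evf_frech (K f : V) : evf A K f = frechApp A f K := by
  rw [evf, frechApp]
  exact finsum_congr fun n => by rw [Dn_def, mul_comm]

/-- The pointwise form of the integrability identity. -/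
lemma star_pointwise {h : ℕ → V} {N : ℕ} (hh : Bnd h N)
    (hskew : ∀ j, adjC A h j = -h j) (F g : V)
    (hp : opApp A h
        (frechApp A g (opApp A h F)
          + adjApp A (fun m => A.pd m (opApp A h F)) g
          - frechApp A F (opApp A h g)
          + adjApp A (fun m => A.pd m F) (opApp A h g))
      = evf A (opApp A h F) (opApp A h g) - evf A (opApp A h g) (opApp A h F)) :
    opApp A h (adjApp A (dafC A h F) g)
      = opApp A (fun j => evf A (opApp A h F) (h j)) g
        - opApp A (dafC A h F) (opApp A h g) := by
  set HF := opApp A h F with hHF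
  set Hg := opApp A h g with hHg
  have hin : frechApp A g HF + adjApp A (fun m => A.pd m HF) g
      - frechApp A F Hg + adjApp A (fun m => A.pd m F) Hg
      = (frechApp A g HF - frechApp A F Hg) + adjApp A (dafC A h F) g := by
    rw [← ADJ A hh hskew F g]
    ring
  rw [hin] at hp
  rw [opApp_add_arg A hh, opApp_sub_arg A hh] at hp
  have e1 : evf A HF Hg
      = opApp A (fun j => evf A HF (h j)) g + opApp A h (frechApp A g HF) := by
    rw [evf_opApp A HF hh g, evf_frech]
  have e2 : evf A Hg HF
      = opApp A (dafC A h F) Hg + opApp A h (frechApp A F Hg) := by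
    rw [evf_opApp A Hg hh F, evf_frech, opApp_evf_swap A hh Hg F]
  rw [e1, e2] at hp
  linear_combination hp

end DiffAlg
namespace DiffAlg
open Function Finset

set_option linter.unusedSectionVars false

variable {V : Type} [CommRing V] [Algebra ℂ V] (A : DiffAlg V)

lemma intChoose_natCast (κ n : ℕ) : intChoose (κ : ℤ) n = (κ.choose n : ℤ) := by
  unfold intChoose
  have hp : (∏ i ∈ Finset.range n, ((κ:ℤ) - (i:ℤ))) = ((κ.descFactorial n : ℕ) : ℤ) := by
    by_cases hn : n ≤ κ
    · rw [Nat.descFactorial_eq_prod_range, Nat.cast_prod]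
      refine Finset.prod_congr rfl fun i hi => ?_
      have hik : i ≤ κ := by have := Finset.mem_range.mp hi; omega
      rw [Nat.cast_sub hik]
    · have hκ : κ < n := by omega
      rw [show ((κ.descFactorial n : ℕ) : ℤ) = 0 from by
        rw [Nat.descFactorial_eq_zero_iff_lt.mpr hκ]; rfl]
      refine Finset.prod_eq_zero (Finset.mem_range.mpr hκ) ?_
      simp
  rw [hp, Nat.descFactorial_eq_factorial_mul_choose]
  push_cast
  exact Int.mul_ediv_cancel_left _ (by exact_mod_cast n.factorial_ne_zero)

lemma loc_coe (c : ℕ → V) (p : ℕ) : loc c (p : ℤ) = c p := by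
  unfold loc
  rw [if_pos (by omega : (0:ℤ) ≤ (p:ℤ))]
  simp

lemma loc_neg {m : ℤ} (hm : m < 0) (c : ℕ → V) : loc c m = 0 := by
  unfold loc
  rw [if_neg (by omega)]

lemma mulZ_loc_eq {a : ℕ → V} {Na : ℕ} (ha : Bnd a Na) (b : ℕ → V) (m : ℤ) :
    mulZ A (loc a) (loc b) m
      = ∑ κ ∈ Finset.range Na, ∑ n ∈ Finset.range (κ + 1),
          ((κ.choose n : ℤ)) • (a κ * A.Dn n (loc b (m - κ + n))) := by
  rw [mulZ]
  have hinner0 : ∀ k : ℤ, loc a k = 0 →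
      (∑ᶠ (n : ℕ), intChoose k n • (loc a k * (fun x => A.total x)^[n] (loc b (m - k + n)))) = 0 := by
    intro k hk
    have : ∀ n : ℕ, intChoose k n • (loc a k * (fun x => A.total x)^[n] (loc b (m - k + n))) = 0 := by
      intro n; rw [hk, zero_mul, smul_zero]
    rw [finsum_congr this, finsum_zero]
  have hsupp : Function.support
      (fun k : ℤ => ∑ᶠ (n : ℕ), intChoose k n • (loc a k * (fun x => A.total x)^[n] (loc b (m - k + n))))
      ⊆ ((Finset.range Na).image ((↑) : ℕ → ℤ) : Finset ℤ) := by
    intro k hk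
    simp only [Finset.coe_image, Set.mem_image, Finset.mem_coe, Finset.mem_range, Finset.coe_range, Set.mem_Iio]
    by_contra hcon
    apply hk
    apply hinner0
    unfold loc
    by_cases h0 : (0:ℤ) ≤ k
    · rw [if_pos h0]
      refine ha k.toNat ?_
      by_contra hlt
      exact hcon ⟨k.toNat, by omega, by omega⟩
    · rw [if_neg h0]
  rw [finsum_eq_sum_of_support_subset _ hsupp,
    Finset.sum_image (fun x _ y _ h => by exact_mod_cast h)]
  refine Finset.sum_congr rfl fun κ hκ => ?_
  have hb : Bnd (fun n : ℕ => intChoose (κ:ℤ) n • (loc a (κ:ℤ) * (fun x => A.total x)^[n] (loc b (m - κ + n)))) (κ + 1) := by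
    intro n hn
    show intChoose (κ:ℤ) n • (loc a (κ:ℤ) * (fun x => A.total x)^[n] (loc b (m - κ + n))) = 0
    rw [intChoose_natCast, Nat.choose_eq_zero_of_lt (by omega), Int.natCast_zero, zero_smul]
  rw [finsum_eq_range hb]
  refine Finset.sum_congr rfl fun n _ => ?_
  rw [intChoose_natCast, loc_coe, Dn_def]

lemma mulZ_loc_neg {a b : ℕ → V} {Na : ℕ} (ha : Bnd a Na) {m : ℤ} (hm : m < 0) :
    mulZ A (loc a) (loc b) m = 0 := by
  rw [mulZ_loc_eq A ha b m]
  refine Finset.sum_eq_zero fun κ hκ => Finset.sum_eq_zero fun n hn => ?_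
  have hn' : (n:ℤ) ≤ (κ:ℤ) := by
    have := Finset.mem_range.mp hn; exact_mod_cast by omega
  rw [loc_neg (by omega), Dn_zero_elem, mul_zero, smul_zero]

/-- composition of differential operators via `mulZ` -/
noncomputable def compC (a b : ℕ → V) : ℕ → V := fun p => mulZ A (loc a) (loc b) (p : ℤ)

lemma mulZ_loc_compC {a : ℕ → V} {Na : ℕ} (ha : Bnd a Na) (b : ℕ → V) (m : ℤ) :
    mulZ A (loc a) (loc b) m = loc (compC A a b) m := by
  by_cases hm : 0 ≤ m
  · unfold loc
    rw [if_pos hm]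
    show mulZ A (loc a) (loc b) m = mulZ A (loc a) (loc b) ((m.toNat : ℕ) : ℤ)
    rw [Int.toNat_of_nonneg hm]
  · rw [loc_neg (by omega), mulZ_loc_neg A ha (by omega)]

lemma Bnd_compC {a b : ℕ → V} {Na Nb : ℕ} (ha : Bnd a Na) (hb : Bnd b Nb) :
    Bnd (compC A a b) (Na + Nb) := by
  intro p hp
  show mulZ A (loc a) (loc b) (p : ℤ) = 0
  rw [mulZ_loc_eq A ha b]
  refine Finset.sum_eq_zero fun κ hκ => Finset.sum_eq_zero fun n hn => ?_
  have hκ' := Finset.mem_range.mp hκ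
  have hn' := Finset.mem_range.mp hn
  have hpos : (0:ℤ) ≤ (p:ℤ) - κ + n := by omega
  have hloc : loc b ((p:ℤ) - κ + n) = b ((p:ℤ) - κ + n).toNat := by
    unfold loc; rw [if_pos hpos]
  rw [hloc, hb _ (by omega), Dn_zero_elem, mul_zero, smul_zero]

lemma sum_shift_aux (f : ℕ → V) (Q : ℕ) :
    ∀ d, ∑ p ∈ Finset.range (d + Q), (if d ≤ p then f (p - d) else 0)
      = ∑ l ∈ Finset.range Q, f l := by
  intro d
  induction d with
  | zero => simp
  | succ d ih =>
    rw [show d + 1 + Q = (d + Q) + 1 from by omega,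
      Finset.sum_range_succ' (fun p => if d + 1 ≤ p then f (p - (d+1)) else 0) (d+Q)]
    rw [show (if d + 1 ≤ 0 then f (0 - (d+1)) else 0) = 0 from if_neg (by omega), add_zero]
    rw [← ih]
    refine Finset.sum_congr rfl fun i _ => ?_
    by_cases hi : d ≤ i
    · rw [if_pos (by omega), if_pos hi]
      congr 1
      omega
    · rw [if_neg (by omega), if_neg hi]

lemma sum_shift {f : ℕ → V} {Q : ℕ} (hf : Bnd f Q) (d P : ℕ) (hP : d + Q ≤ P) :
    ∑ p ∈ Finset.range P, (if d ≤ p then f (p - d) else 0)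
      = ∑ l ∈ Finset.range Q, f l := by
  rw [← sum_shift_aux f Q d]
  refine (Finset.sum_subset (Finset.range_subset_range.mpr hP) fun p _ hp => ?_).symm
  have hp' : d + Q ≤ p := by
    by_contra hc
    exact hp (Finset.mem_range.mpr (by omega))
  by_cases hd : d ≤ p
  · rw [if_pos hd, hf (p - d) (by omega)]
  · rw [if_neg hd]

lemma opApp_compC {a b : ℕ → V} {Na Nb : ℕ} (ha : Bnd a Na) (hb : Bnd b Nb) (g : V) :
    opApp A (compC A a b) g = opApp A a (opApp A b g) := by
  rw [opApp_eq A (Bnd_compC A ha hb), opApp_eq A ha, opApp_eq A hb]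
  have hRHS : ∑ κ ∈ Finset.range Na, a κ * A.Dn κ (∑ l ∈ Finset.range Nb, b l * A.Dn l g)
      = ∑ κ ∈ Finset.range Na, ∑ n ∈ Finset.range (κ + 1), ∑ l ∈ Finset.range Nb,
          ((κ.choose n : ℤ)) • (a κ * A.Dn n (b l) * A.Dn (l + (κ - n)) g) := by
    refine Finset.sum_congr rfl fun κ _ => ?_
    have e1 : ∀ l ∈ Finset.range Nb, a κ * A.Dn κ (b l * A.Dn l g)
        = ∑ n ∈ Finset.range (κ + 1),
            ((κ.choose n : ℤ)) • (a κ * A.Dn n (b l) * A.Dn (l + (κ - n)) g) := by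
      intro l _
      rw [Dn_mul, Finset.mul_sum]
      refine Finset.sum_congr rfl fun n hn => ?_
      have hn' : n ≤ κ := by have := Finset.mem_range.mp hn; omega
      rw [Dn_Dn, mul_smul_comm]
      congr 1
      rw [show κ - n + l = l + (κ - n) from by omega]
      ring
    rw [Dn_sum, Finset.mul_sum, Finset.sum_congr rfl e1, Finset.sum_comm]
  rw [hRHS]
  have hLHS : ∀ p ∈ Finset.range (Na + Nb), compC A a b p * A.Dn p g
      = ∑ κ ∈ Finset.range Na, ∑ n ∈ Finset.range (κ + 1),
          ((κ.choose n : ℤ)) • (a κ * A.Dn n (loc b ((p:ℤ) - κ + n)) * A.Dn p g) := by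
    intro p _
    show mulZ A (loc a) (loc b) (p:ℤ) * A.Dn p g = _
    rw [mulZ_loc_eq A ha b, Finset.sum_mul]
    refine Finset.sum_congr rfl fun κ _ => ?_
    rw [Finset.sum_mul]
    refine Finset.sum_congr rfl fun n _ => ?_
    rw [smul_mul_assoc]
  rw [Finset.sum_congr rfl hLHS]
  rw [Finset.sum_comm]
  refine Finset.sum_congr rfl fun κ hκ => ?_
  have hκ' : κ < Na := Finset.mem_range.mp hκ
  rw [Finset.sum_comm]
  refine Finset.sum_congr rfl fun n hn => ?_
  have hn' : n ≤ κ := by have := Finset.mem_range.mp hn; omega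
  have hterm : ∀ p ∈ Finset.range (Na + Nb),
      ((κ.choose n : ℤ)) • (a κ * A.Dn n (loc b ((p:ℤ) - κ + n)) * A.Dn p g)
      = (if κ - n ≤ p then
          ((κ.choose n : ℤ)) • (a κ * A.Dn n (b (p - (κ - n))) * A.Dn ((p - (κ - n)) + (κ - n)) g)
        else 0) := by
    intro p _
    by_cases hdp : κ - n ≤ p
    · rw [if_pos hdp]
      have hlocv : loc b ((p:ℤ) - κ + n) = b (p - (κ - n)) := by
        unfold loc
        rw [if_pos (by omega)]
        congr 1
        omega
      rw [hlocv, show p - (κ - n) + (κ - n) = p from by omega]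
    · rw [if_neg hdp]
      rw [loc_neg (by omega) b, Dn_zero_elem, mul_zero, zero_mul, smul_zero]
  rw [Finset.sum_congr rfl hterm]
  have hfB : Bnd (fun l => ((κ.choose n : ℤ)) • (a κ * A.Dn n (b l) * A.Dn (l + (κ - n)) g)) Nb := by
    intro l hl
    show ((κ.choose n : ℤ)) • (a κ * A.Dn n (b l) * A.Dn (l + (κ - n)) g) = 0
    rw [hb l hl, Dn_zero_elem, mul_zero, zero_mul, smul_zero]
  exact sum_shift hfB (κ - n) (Na + Nb) (by omega)

end DiffAlg
namespace DiffAlg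
open Function Finset

set_option linter.unusedSectionVars false

variable {V : Type} [CommRing V] [Algebra ℂ V] (A : DiffAlg V)

lemma ext_zero {c : ℕ → V} {Q : ℕ} (hc : Bnd c Q)
    (hz : ∀ g : V, opApp A c g = 0) : ∀ j, c j = 0 := by
  obtain ⟨M0, hM0⟩ := exists_bnd_forall A (Finset.range Q) c
  intro j
  have h1 : opApp A c (A.u M0) = 0 := hz _
  rw [opApp_eq A hc] at h1
  have h3 := congrArg (A.pd (M0 + j)) h1
  rw [map_sum, map_zero] at h3
  have h4 : ∀ k ∈ Finset.range Q, A.pd (M0 + j) (c k * A.Dn k (A.u M0))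
      = if k = j then c k else 0 := by
    intro k hk
    rw [Dn_u, Derivation.leibniz]
    simp only [smul_eq_mul]
    rw [A.pd_u, show A.pd (M0 + j) (c k) = 0 from hM0 k hk (M0 + j) (by omega), mul_zero, add_zero]
    by_cases hkj : k = j
    · rw [if_pos (by omega), if_pos hkj, mul_one]
    · rw [if_neg (by omega), if_neg hkj, mul_zero]
  rw [Finset.sum_congr rfl h4, Finset.sum_ite_eq' (Finset.range Q) j c] at h3
  by_cases hj : j ∈ Finset.range Q
  · rwa [if_pos hj] at h3
  · exact hc j (by simpa using hj)

lemma dafC_negC (c : ℕ → V) (G : V) (j : ℕ) :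
    dafC A (fun k => -(c k)) G j = -(dafC A c G j) := by
  rw [dafC, dafC, ← finsum_neg_distrib]
  exact finsum_congr fun k => by rw [map_neg, mul_neg]

lemma bnd_of_finite {c : ℕ → V} (hfin : Set.Finite (Function.support c)) :
    ∃ N, Bnd c N := by
  obtain ⟨s, hs⟩ := hfin.exists_finset_coe
  refine ⟨s.sup id + 1, fun k hk => ?_⟩
  by_contra hcon
  have hmem : k ∈ s := by
    rw [← Finset.mem_coe, hs]
    exact hcon
  have h2 : k ≤ s.sup id := Finset.le_sup (f := id) hmem
  omega

end DiffAlg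

theorem poisson_is_integrable' {V : Type} [CommRing V] [Algebra ℂ V]
    (A : DiffAlg V) (h : ℕ → V) (hfin : Set.Finite (Function.support h))
    (hskew : ∀ j, DiffAlg.adjC A h j = - h j)
    (hpoisson : ∀ F G : V,
      DiffAlg.opApp A h
        (DiffAlg.frechApp A G (DiffAlg.opApp A h F)
          + DiffAlg.adjApp A (fun m => A.pd m (DiffAlg.opApp A h F)) G
          - DiffAlg.frechApp A F (DiffAlg.opApp A h G)
          + DiffAlg.adjApp A (fun m => A.pd m F) (DiffAlg.opApp A h G))
      = DiffAlg.evf A (DiffAlg.opApp A h F) (DiffAlg.opApp A h G)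
        - DiffAlg.evf A (DiffAlg.opApp A h G) (DiffAlg.opApp A h F)) :
    (∀ F G : V, DiffAlg.adjApp A (DiffAlg.dafC A h F) G
      = - DiffAlg.adjApp A (DiffAlg.dafC A h G) F) ∧
    (∀ F : V, ∀ m : ℤ,
      DiffAlg.loc (fun j => DiffAlg.evf A (DiffAlg.opApp A h F) (h j)) m
        - DiffAlg.mulZ A (DiffAlg.loc (DiffAlg.dafC A h F)) (DiffAlg.loc h) m
      = DiffAlg.mulZ A (DiffAlg.loc h)
          (DiffAlg.loc (DiffAlg.adjC A (DiffAlg.dafC A h F))) m) := by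
  open DiffAlg in
  obtain ⟨N, hb⟩ := DiffAlg.bnd_of_finite hfin
  constructor
  · -- part 1: skew-symmetry of M
    intro F G
    rw [DiffAlg.P1_gen A N h hb F G]
    have h1 : ∀ j, DiffAlg.dafC A (DiffAlg.adjC A h) G j
        = DiffAlg.dafC A (fun k => -(h k)) G j :=
      fun j => DiffAlg.dafC_congrC A hskew G j
    have h2 : ∀ j, DiffAlg.dafC A (fun k => -(h k)) G j = -(DiffAlg.dafC A h G j) :=
      fun j => DiffAlg.dafC_negC A h G j
    rw [DiffAlg.adjApp_congrC A h1, DiffAlg.adjApp_congrC A h2,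
      DiffAlg.adjApp_negC A (DiffAlg.dafC A h G) F]
  · -- part 2
    intro F m
    set E : ℕ → V := fun j => DiffAlg.evf A (DiffAlg.opApp A h F) (h j) with hE
    set a1 : ℕ → V := DiffAlg.dafC A h F with ha1
    set w : ℕ → V := DiffAlg.adjC A a1 with hw
    have hEb : DiffAlg.Bnd E N := DiffAlg.Bnd_evfC A hb (DiffAlg.opApp A h F)
    obtain ⟨M1, hM1⟩ := DiffAlg.Bnd_dafC' A h hb F
    have hwB : DiffAlg.Bnd w M1 := DiffAlg.Bnd_adjC A hM1
    -- rewrite mulZ as loc of compC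
    rw [DiffAlg.mulZ_loc_compC A hM1 h m, DiffAlg.mulZ_loc_compC A hb w m]
    -- pointwise coefficient identity
    have key : ∀ p : ℕ, E p - DiffAlg.compC A a1 h p = DiffAlg.compC A h w p := by
      have hΔb : DiffAlg.Bnd
          (fun p => E p - DiffAlg.compC A a1 h p - DiffAlg.compC A h w p)
          (max N (max (M1 + N) (N + M1))) := by
        intro p hp
        show E p - DiffAlg.compC A a1 h p - DiffAlg.compC A h w p = 0
        rw [hEb p (by omega), DiffAlg.Bnd_compC A hM1 hb p (by omega),
          DiffAlg.Bnd_compC A hb hwB p (by omega)]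
        ring
      have hz : ∀ g : V, DiffAlg.opApp A
          (fun p => E p - DiffAlg.compC A a1 h p - DiffAlg.compC A h w p) g = 0 := by
        intro g
        set B := max N (max (M1 + N) (N + M1)) with hB
        have hE2 : DiffAlg.Bnd E B := hEb.mono (by omega)
        have hc1 : DiffAlg.Bnd (DiffAlg.compC A a1 h) B := (DiffAlg.Bnd_compC A hM1 hb).mono (by omega)
        have hc2 : DiffAlg.Bnd (DiffAlg.compC A h w) B := (DiffAlg.Bnd_compC A hb hwB).mono (by omega)
        have hsub1 : DiffAlg.Bnd (fun p => E p - DiffAlg.compC A a1 h p) B := by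
          intro p hp
          show E p - DiffAlg.compC A a1 h p = 0
          rw [hE2 p hp, hc1 p hp, sub_zero]
        rw [DiffAlg.opApp_subC A hsub1 hc2 g, DiffAlg.opApp_subC A hE2 hc1 g]
        rw [DiffAlg.opApp_compC A hM1 hb g, DiffAlg.opApp_compC A hb hwB g]
        have hadj : DiffAlg.opApp A w g = DiffAlg.adjApp A a1 g :=
          (DiffAlg.adjApp_eq_opApp_adjC A hM1 g).symm
        rw [hadj]
        have hstar := DiffAlg.star_pointwise A hb hskew F g (hpoisson F g)
        rw [← ha1, ← hE] at hstar
        rw [hstar]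
        ring
      intro p
      have := DiffAlg.ext_zero A hΔb hz p
      have h2 : E p - DiffAlg.compC A a1 h p - DiffAlg.compC A h w p = 0 := this
      linear_combination h2
    by_cases hm : 0 ≤ m
    · have hml : m = ((m.toNat : ℕ) : ℤ) := by omega
      rw [hml, DiffAlg.loc_coe, DiffAlg.loc_coe, DiffAlg.loc_coe]
      exact key m.toNat
    · rw [DiffAlg.loc_neg (by omega), DiffAlg.loc_neg (by omega), DiffAlg.loc_neg (by omega)]
      ring

/-- every Poisson differential operator `H` over `V` (skew-adjoint and
satisfying the Poisson identity) is integrable: the skew-symmetric bidifferential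
operator `M` with `M_F = (D_H)_F^*` satisfies
`X_{H(F)}(H) - (D_H)_F ∘ H = H ∘ (D_H)_F^*` for all `F ∈ V`. -/
theorem poisson_is_integrable {V : Type} [CommRing V] [Algebra ℂ V]
    (A : DiffAlg V) (h : ℕ → V) (hfin : Set.Finite (Function.support h))
    (hskew : ∀ j, DiffAlg.adjC A h j = - h j)
    (hpoisson : ∀ F G : V,
      DiffAlg.opApp A h
        (DiffAlg.frechApp A G (DiffAlg.opApp A h F)
          + DiffAlg.adjApp A (fun m => A.pd m (DiffAlg.opApp A h F)) G
          - DiffAlg.frechApp A F (DiffAlg.opApp A h G)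
          + DiffAlg.adjApp A (fun m => A.pd m F) (DiffAlg.opApp A h G))
      = DiffAlg.evf A (DiffAlg.opApp A h F) (DiffAlg.opApp A h G)
        - DiffAlg.evf A (DiffAlg.opApp A h G) (DiffAlg.opApp A h F)) :
    (∀ F G : V, DiffAlg.adjApp A (DiffAlg.dafC A h F) G
      = - DiffAlg.adjApp A (DiffAlg.dafC A h G) F) ∧
    (∀ F : V, ∀ m : ℤ,
      DiffAlg.loc (fun j => DiffAlg.evf A (DiffAlg.opApp A h F) (h j)) m
        - DiffAlg.mulZ A (DiffAlg.loc (DiffAlg.dafC A h F)) (DiffAlg.loc h) m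
      = DiffAlg.mulZ A (DiffAlg.loc h)
          (DiffAlg.loc (DiffAlg.adjC A (DiffAlg.dafC A h F))) m) := by
  exact poisson_is_integrable' A h hfin hskew hpoisson
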